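/- Let W be an irreducible Markov generator, W̃ the HTR generator, and F̃ = log(W_{12} p^st_2 / (W_{21} p^st_1)) the effective affinity. For any oriented cycle C containing the edge 1←2 exactly once, the HTR cycle affinity satisfies F_{W̃}(C) = 2F̃ − F_W(C). -/
import Mathlib


/-- A generator is irreducible if any two distinct states are connected by a
chain of transitions with strictly positive rates (column = source state). -/
def MatrixIrreducible {n : ℕ} (W : Matrix (Fin n) (Fin n) ℝ) : Prop :=
  ∀ i j : Fin n, i ≠ j → ∃ k : ℕ, ∃ c : Fin (k + 1) → Fin n,
    c 0 = j ∧ c (Fin.last k) = i ∧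
    ∀ m : Fin k, 0 < W (c m.succ) (c m.castSucc)

lemma fin_telescope {k : ℕ} (G : Fin (k + 1) → ℝ) :
    ∑ s : Fin k, (G s.succ - G s.castSucc) = G (Fin.last k) - G 0 := by
  induction k with
  | zero => simp
  | succ n ih =>
    rw [Fin.sum_univ_castSucc]
    have := ih (fun t => G t.castSucc)
    simp only [Fin.succ_castSucc] at this ⊢
    rw [this]
    simp [Fin.succ_last]

/-- Theorem 5b: along any cycle traversing the observable edge
`1 ← 2` (i.e. the transition from index `1` to index `0`) exactly once and
never in the reverse direction, the HTR cycle affinity is `2F̃ − F(C)` where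
`F̃ = log(W₁₂ pst₂ / (W₂₁ pst₁))` is the effective affinity. -/
theorem HTR_cycle_affinity_observable {m : ℕ}
    (W Wtil : Matrix (Fin (m + 3)) (Fin (m + 3)) ℝ)
    (hoff : ∀ i j : Fin (m + 3), i ≠ j → 0 ≤ W i j)
    (hcol : ∀ j : Fin (m + 3), ∑ i : Fin (m + 3), W i j = 0)
    (hirr : MatrixIrreducible W)
    (pst : Fin (m + 3) → ℝ) (hpst : ∀ i, 0 < pst i)
    (h12pos : 0 < W 0 1) (h21pos : 0 < W 1 0)
    (hWtil12 : Wtil 0 1 = W 0 1) (hWtil21 : Wtil 1 0 = W 1 0)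
    (hWtil : ∀ i j : Fin (m + 3), i ≠ j →
      ¬((i = 0 ∧ j = 1) ∨ (i = 1 ∧ j = 0)) →
      Wtil i j = W j i * pst i / pst j)
    (k : ℕ) (c : Fin (k + 1) → Fin (m + 3))
    (hcyc : c (Fin.last k) = c 0)
    (hdist : ∀ s : Fin k, c s.castSucc ≠ c s.succ)
    (honce : ∃! s : Fin k, c s.castSucc = 1 ∧ c s.succ = 0)
    (hnorev : ∀ s : Fin k, ¬(c s.castSucc = 0 ∧ c s.succ = 1))
    (hposfwd : ∀ s : Fin k, 0 < W (c s.succ) (c s.castSucc))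
    (hposbwd : ∀ s : Fin k, 0 < W (c s.castSucc) (c s.succ)) :
    ∑ s : Fin k, Real.log (Wtil (c s.succ) (c s.castSucc) /
        Wtil (c s.castSucc) (c s.succ)) =
    2 * Real.log (W 0 1 * pst 1 / (W 1 0 * pst 0)) -
      ∑ s : Fin k, Real.log (W (c s.succ) (c s.castSucc) /
        W (c s.castSucc) (c s.succ)) := by
  obtain ⟨s₀, hs₀, huniq⟩ := honce
  have hFval : Real.log (W 0 1 * pst 1 / (W 1 0 * pst 0)) =
      Real.log (W 0 1) + Real.log (pst 1) - (Real.log (W 1 0) + Real.log (pst 0)) := by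
    rw [Real.log_div (mul_pos h12pos (hpst 1)).ne' (mul_pos h21pos (hpst 0)).ne',
      Real.log_mul h12pos.ne' (hpst 1).ne', Real.log_mul h21pos.ne' (hpst 0).ne']
  have key : ∀ s : Fin k,
      Real.log (Wtil (c s.succ) (c s.castSucc) / Wtil (c s.castSucc) (c s.succ))
      + Real.log (W (c s.succ) (c s.castSucc) / W (c s.castSucc) (c s.succ))
      - 2 * (Real.log (pst (c s.succ)) - Real.log (pst (c s.castSucc)))
      = if s = s₀ then 2 * Real.log (W 0 1 * pst 1 / (W 1 0 * pst 0)) else 0 := by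
    intro s
    by_cases hss : s = s₀
    · subst hss
      rw [hs₀.1, hs₀.2, hWtil12, hWtil21, if_pos rfl, hFval,
        Real.log_div h12pos.ne' h21pos.ne']
      ring
    · rw [if_neg hss]
      set a := c s.castSucc with ha
      set b := c s.succ with hb
      have hab : a ≠ b := hdist s
      have hWab : 0 < W a b := hposbwd s
      have hWba : 0 < W b a := hposfwd s
      have pa := hpst a
      have pb := hpst b
      have hne1 : ¬((b = 0 ∧ a = 1) ∨ (b = 1 ∧ a = 0)) := by
        rintro (⟨h1, h2⟩ | ⟨h1, h2⟩)
        · exact hss (huniq s ⟨h2, h1⟩)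
        · exact hnorev s ⟨h2, h1⟩
      have hne2 : ¬((a = 0 ∧ b = 1) ∨ (a = 1 ∧ b = 0)) := by
        rintro (⟨h1, h2⟩ | ⟨h1, h2⟩)
        · exact hnorev s ⟨h1, h2⟩
        · exact hss (huniq s ⟨h1, h2⟩)
      rw [hWtil b a hab.symm hne1, hWtil a b hab hne2]
      rw [Real.log_div (by positivity) (by positivity),
        Real.log_div (by positivity) pa.ne',
        Real.log_div (by positivity) pb.ne',
        Real.log_mul hWab.ne' pb.ne', Real.log_mul hWba.ne' pa.ne',
        Real.log_div hWba.ne' hWab.ne']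
      ring
  have htel : ∑ s : Fin k,
      (Real.log (pst (c s.succ)) - Real.log (pst (c s.castSucc))) = 0 := by
    have := fin_telescope (fun t => Real.log (pst (c t)))
    simpa [hcyc] using this
  have hsum : ∑ s : Fin k,
      (Real.log (Wtil (c s.succ) (c s.castSucc) / Wtil (c s.castSucc) (c s.succ))
      + Real.log (W (c s.succ) (c s.castSucc) / W (c s.castSucc) (c s.succ))
      - 2 * (Real.log (pst (c s.succ)) - Real.log (pst (c s.castSucc))))
      = 2 * Real.log (W 0 1 * pst 1 / (W 1 0 * pst 0)) := by
    rw [Finset.sum_congr rfl (fun s _ => key s), Finset.sum_ite_eq' Finset.univ s₀]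
    simp
  rw [Finset.sum_sub_distrib, Finset.sum_add_distrib, ← Finset.mul_sum, htel] at hsum
  linarith
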